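/- For n ∈ ℕ with n ≥ 1, let S_n = {ζ ∈ ℂ : |arg ζ| < 1/n, 0 < |ζ| < 1/n} and let H_n be the Banach space of holomorphic f : S_n → ℂ with norm ‖f‖_n = sup_{ζ ∈ S_n} |ζ|^n |f(ζ)| < ∞. Then the restriction map H_n → H_{n+1}, f ↦ f|_{S_{n+1}}, is a compact linear operator: every sequence in the unit ball of H_n has a subsequence whose restrictions converge in the norm of H_{n+1}. -/

import Mathlib

open Complex Set Filter Topology

/-- The sector `S_n`. -/
def sector (n : ℕ) : Set ℂ :=
  {ζ : ℂ | |Complex.arg ζ| < 1 / n ∧ 0 < ‖ζ‖ ∧ ‖ζ‖ < 1 / n}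

/-- Compact exhaustion pieces of the closure of `sector (n+1)` away from `0`. -/
def sectK (n m : ℕ) : Set ℂ :=
  {ζ : ℂ | ‖ζ‖ * Real.cos (1/((n:ℝ)+1)) ≤ ζ.re ∧ 1/((m:ℝ)+2) ≤ ‖ζ‖ ∧
    ‖ζ‖ ≤ 1/((n : ℝ)+1)}

lemma one_div_succ_lt {n : ℕ} (hn : 1 ≤ n) : (1:ℝ)/((n:ℝ)+1) < 1/n := by
  have h0 : (0:ℝ) < n := by exact_mod_cast hn
  apply one_div_lt_one_div_of_lt h0
  linarith

lemma one_div_succ_le_one {n : ℕ} (hn : 1 ≤ n) : (1:ℝ)/((n:ℝ)+1) ≤ 1 := by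
  have h0 : (1:ℝ) ≤ n := by exact_mod_cast hn
  rw [div_le_one (by positivity)]; linarith

lemma re_pos_of_sector {n : ℕ} (hn : 1 ≤ n) {ζ : ℂ} (hζ : ζ ∈ sector n) : 0 < ζ.re := by
  have h0 : (1:ℝ) ≤ n := by exact_mod_cast hn
  rw [← Complex.norm_mul_cos_arg ζ]
  apply mul_pos hζ.2.1
  apply Real.cos_pos_of_mem_Ioo
  have h1 : |Complex.arg ζ| < 1/(n:ℝ) := hζ.1
  have h2 : (1:ℝ)/(n:ℝ) ≤ 1 := by
    rw [div_le_one (by linarith)]; linarith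
  have hpi := Real.pi_gt_three
  rw [abs_lt] at h1
  constructor <;> [linarith; linarith]

lemma isOpen_sector {n : ℕ} (hn : 1 ≤ n) : IsOpen (sector n) := by
  rw [isOpen_iff_mem_nhds]
  intro x hx
  have hre : 0 < x.re := re_pos_of_sector hn hx
  have harg : ContinuousAt Complex.arg x := Complex.continuousAt_arg (Or.inl hre)
  have h1 : ∀ᶠ ζ in nhds x, |Complex.arg ζ| < 1/(n:ℝ) :=
    (harg.abs).eventually_lt_const hx.1
  have h2 : ∀ᶠ ζ in nhds x, 0 < ‖ζ‖ :=
    continuous_norm.continuousAt.eventually_const_lt hx.2.1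
  have h3 : ∀ᶠ ζ in nhds x, ‖ζ‖ < 1/(n:ℝ) :=
    continuous_norm.continuousAt.eventually_lt_const hx.2.2
  filter_upwards [h1, h2, h3] with ζ a b c
  exact ⟨a, b, c⟩

lemma sector_succ_subset {n : ℕ} (hn : 1 ≤ n) : sector (n+1) ⊆ sector n := by
  intro ζ hζ
  have h := one_div_succ_lt hn
  obtain ⟨h1, h2, h3⟩ := hζ
  push_cast at h1 h3
  exact ⟨lt_trans h1 h, h2, lt_trans h3 h⟩

lemma isCompact_sectK (n m : ℕ) : IsCompact (sectK n m) := by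
  apply Metric.isCompact_of_isClosed_isBounded
  · have c1 : IsClosed {ζ : ℂ | ‖ζ‖ * Real.cos (1/((n:ℝ)+1)) ≤ ζ.re} :=
      isClosed_le (by continuity) Complex.continuous_re
    have c2 : IsClosed {ζ : ℂ | 1/((m:ℝ)+2) ≤ ‖ζ‖} :=
      isClosed_le continuous_const continuous_norm
    have c3 : IsClosed {ζ : ℂ | ‖ζ‖ ≤ 1/((n : ℝ)+1)} :=
      isClosed_le continuous_norm continuous_const
    exact (c1.inter (c2.inter c3))
  · apply Bornology.IsBounded.subset (Metric.isBounded_closedBall (x := (0:ℂ)) (r := 1/((n:ℝ)+1)))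
    intro ζ hζ
    simpa [Complex.dist_eq] using hζ.2.2

lemma sectK_subset_sector {n : ℕ} (hn : 1 ≤ n) (m : ℕ) : sectK n m ⊆ sector n := by
  intro ζ hζ
  obtain ⟨h1, h2, h3⟩ := hζ
  have hpos : 0 < ‖ζ‖ := lt_of_lt_of_le (by positivity) h2
  have hne : ζ ≠ 0 := by simpa using hpos.ne'
  have habs : ‖ζ‖ < 1/(n:ℝ) := lt_of_le_of_lt h3 (one_div_succ_lt hn)
  refine ⟨?_, hpos, habs⟩
  have hcos : Real.cos (1/((n:ℝ)+1)) ≤ Real.cos |Complex.arg ζ| := by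
    rw [Real.cos_abs]
    rw [← Complex.norm_mul_cos_arg ζ] at h1
    rw [mul_comm] at h1
    exact le_of_mul_le_mul_right (by linarith :
      Real.cos (1/((n:ℝ)+1)) * ‖ζ‖ ≤ Real.cos (Complex.arg ζ) * ‖ζ‖) hpos
  have hle : |Complex.arg ζ| ≤ 1/((n:ℝ)+1) := by
    by_contra hgt
    push_neg at hgt
    have hpi := Real.pi_gt_three
    have h5 : Real.cos |Complex.arg ζ| < Real.cos (1/((n:ℝ)+1)) := by
      apply Real.strictAntiOn_cos ⟨by positivity, ?_⟩ ⟨abs_nonneg _, ?_⟩ hgt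
      · have := one_div_succ_le_one hn; linarith
      · have := Complex.abs_arg_le_pi ζ; linarith
    linarith
  exact lt_of_le_of_lt hle (one_div_succ_lt hn)

lemma sector_succ_mem_sectK {n : ℕ} (hn : 1 ≤ n) (m : ℕ) {ζ : ℂ}
    (hζ : ζ ∈ sector (n+1)) (habs : 1/((m:ℝ)+2) ≤ ‖ζ‖) : ζ ∈ sectK n m := by
  obtain ⟨h1, h2, h3⟩ := hζ
  push_cast at h1 h3
  refine ⟨?_, habs, h3.le⟩
  have hcos : Real.cos (1/((n:ℝ)+1)) ≤ Real.cos |Complex.arg ζ| := by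
    apply Real.cos_le_cos_of_nonneg_of_le_pi (abs_nonneg _) ?_ h1.le
    have hpi := Real.pi_gt_three
    have := one_div_succ_le_one hn
    linarith
  rw [Real.cos_abs] at hcos
  calc ‖ζ‖ * Real.cos (1/((n:ℝ)+1))
      ≤ ‖ζ‖ * Real.cos (Complex.arg ζ) := by
        apply mul_le_mul_of_nonneg_left hcos (norm_nonneg ζ)
    _ = ζ.re := Complex.norm_mul_cos_arg ζ

lemma lip_est {n : ℕ} (hopen : IsOpen (sector n)) (f : ℕ → ℂ → ℂ)
    (hol : ∀ p, DifferentiableOn ℂ (f p) (sector n))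
    (hb : ∀ p, ∀ ζ ∈ sector n, (‖ζ‖) ^ n * ‖f p ζ‖ ≤ 1)
    {x : ℂ} (hx : x ∈ sector n) :
    ∃ ρ > 0, ∃ L, 0 ≤ L ∧ Metric.ball x ρ ⊆ sector n ∧
      ∀ p, ∀ y ∈ Metric.ball x ρ, ∀ z ∈ Metric.ball x ρ,
        dist (f p y) (f p z) ≤ L * dist y z := by
  obtain ⟨r, hr, hball⟩ := Metric.isOpen_iff.1 hopen x hx
  have haxpos : 0 < ‖x‖ := hx.2.1
  set ρ : ℝ := min (r/2) (‖x‖ / 4) with hρdef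
  have hρpos : 0 < ρ := lt_min (by linarith) (by positivity)
  have h2ρ : Metric.ball x (2*ρ) ⊆ sector n := by
    apply Subset.trans (Metric.ball_subset_ball ?_) hball
    have : ρ ≤ r/2 := min_le_left _ _
    linarith
  have hlow : ∀ y ∈ Metric.ball x (2*ρ), ‖x‖ / 2 ≤ ‖y‖ := by
    intro y hy
    have h1 : dist y x < 2*ρ := Metric.mem_ball.1 hy
    have h2 : 2*ρ ≤ ‖x‖ / 2 := by
      have : ρ ≤ ‖x‖ / 4 := min_le_right _ _
      linarith
    have h3 : |‖y‖ - ‖x‖| ≤ dist y x := by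
      simpa [Complex.dist_eq] using abs_norm_sub_norm_le y x
    rw [abs_le] at h3
    linarith [h3.1]
  set C : ℝ := ((‖x‖ / 2)^n)⁻¹ with hCdef
  have hC0 : 0 ≤ C := by positivity
  have hbound : ∀ p, ∀ y ∈ Metric.ball x (2*ρ), ‖f p y‖ ≤ C := by
    intro p y hy
    have hy' : y ∈ sector n := h2ρ hy
    have h1 := hb p y hy'
    have h2 : (‖x‖ / 2)^n ≤ (‖y‖)^n :=
      pow_le_pow_left₀ (by positivity) (hlow y hy) n
    have h3 : (‖x‖ / 2)^n * ‖f p y‖ ≤ 1 := by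
      calc (‖x‖ / 2)^n * ‖f p y‖
          ≤ (‖y‖)^n * ‖f p y‖ :=
            mul_le_mul_of_nonneg_right h2 (norm_nonneg _)
        _ ≤ 1 := h1
    rw [hCdef, ← one_div]
    rw [le_div_iff₀ (by positivity)]
    linarith [h3]
  refine ⟨ρ, hρpos, (2*C+1)/ρ, by positivity, ?_, ?_⟩
  · exact Subset.trans (Metric.ball_subset_ball (by linarith)) h2ρ
  intro p y hy z hz
  have hyz2 : ∀ w ∈ Metric.ball z ρ, w ∈ Metric.ball x (2*ρ) := by
    intro w hw
    rw [Metric.mem_ball] at *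
    calc dist w x ≤ dist w z + dist z x := dist_triangle _ _ _
      _ < ρ + ρ := by exact add_lt_add hw hz
      _ = 2*ρ := by ring
  have hy2 : y ∈ Metric.ball x (2*ρ) := Metric.ball_subset_ball (by linarith) hy
  have hz2 : z ∈ Metric.ball x (2*ρ) := Metric.ball_subset_ball (by linarith) hz
  have hfy : ‖f p y‖ ≤ C := hbound p y hy2
  have hfz : ‖f p z‖ ≤ C := hbound p z hz2
  rcases lt_or_ge (dist y z) ρ with hcase | hcase
  · have hyz : y ∈ Metric.ball z ρ := Metric.mem_ball.2 hcase
    have hd : DifferentiableOn ℂ (f p) (Metric.ball z ρ) :=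
      (hol p).mono (fun w hw => h2ρ (hyz2 w hw))
    have hmaps : MapsTo (f p) (Metric.ball z ρ) (Metric.ball (f p z) (2*C+1)) := by
      intro w hw
      rw [Metric.mem_ball]
      calc dist (f p w) (f p z) ≤ ‖f p w‖ + ‖f p z‖ := dist_le_norm_add_norm _ _
        _ ≤ C + C := add_le_add (hbound p w (hyz2 w hw)) hfz
        _ < 2*C+1 := by linarith
    exact Complex.dist_le_div_mul_dist_of_mapsTo_ball hd (hmaps.mono_right Metric.ball_subset_closedBall) hyz
  · calc dist (f p y) (f p z) ≤ ‖f p y‖ + ‖f p z‖ := dist_le_norm_add_norm _ _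
      _ ≤ 2*C + 1 := by linarith
      _ = (2*C+1)/ρ * ρ := by field_simp
      _ ≤ (2*C+1)/ρ * dist y z := by
          apply mul_le_mul_of_nonneg_left hcase (by positivity)

/-- The restriction map `H_n → H_{n+1}` is compact: every sequence in the unit
ball of `H_n` has a subsequence whose restrictions converge in the `H_{n+1}` norm. -/
theorem stmt5 (n : ℕ) (hn : 1 ≤ n) (f : ℕ → ℂ → ℂ)
    (hol : ∀ p, DifferentiableOn ℂ (f p) (sector n))
    (ball : ∀ p, ∀ ζ ∈ sector n, (‖ζ‖) ^ n * ‖f p ζ‖ ≤ 1) :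
    ∃ φ : ℕ → ℕ, StrictMono φ ∧ ∃ g : ℂ → ℂ,
      DifferentiableOn ℂ g (sector (n + 1)) ∧
      (∃ M : ℝ, ∀ ζ ∈ sector (n + 1),
        (‖ζ‖) ^ (n + 1) * ‖g ζ‖ ≤ M) ∧
      (∀ ε > 0, ∃ q₀ : ℕ, ∀ q ≥ q₀, ∀ ζ ∈ sector (n + 1),
        (‖ζ‖) ^ (n + 1) * ‖f (φ q) ζ - g ζ‖ ≤ ε) := by
  have hopen : IsOpen (sector n) := isOpen_sector hn
  -- a countable dense subset of the sector
  obtain ⟨D, hDc, hDd⟩ := TopologicalSpace.exists_countable_dense ℂ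
  set D' : Set ℂ := D ∩ sector n with hD'def
  have hD'c : D'.Countable := hDc.mono inter_subset_left
  haveI := hD'c.to_subtype
  -- diagonal extraction via compactness of a countable product of closed balls
  set C : D' → ℝ := fun d => (((‖(d:ℂ)‖))^n)⁻¹ with hCdef
  have hFmem : ∀ p, (fun d : D' => f p d) ∈ Set.pi univ (fun d => Metric.closedBall (0:ℂ) (C d)) := by
    intro p
    rw [Set.mem_univ_pi]
    intro d
    rw [Metric.mem_closedBall, dist_zero_right]
    have hd : (d:ℂ) ∈ sector n := d.2.2
    have h1 := ball p d hd
    have hpos : 0 < (‖(d:ℂ)‖)^n := pow_pos hd.2.1 n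
    show ‖f p ↑d‖ ≤ (‖(d:ℂ)‖ ^ n)⁻¹
    rw [← one_div, le_div_iff₀ hpos]
    linarith
  have hcpt : IsCompact (Set.pi univ fun d : D' => Metric.closedBall (0:ℂ) (C d)) :=
    isCompact_univ_pi fun d => isCompact_closedBall _ _
  obtain ⟨a, -, φ, hφ, hconv⟩ := hcpt.tendsto_subseq hFmem
  have hpt : ∀ d : D', Tendsto (fun q => f (φ q) (d:ℂ)) atTop (𝓝 (a d)) := by
    intro d
    exact tendsto_pi_nhds.1 hconv d
  -- pointwise Cauchy, hence pointwise convergent, on all of sector n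
  have hCauchy : ∀ x ∈ sector n, CauchySeq (fun q => f (φ q) x) := by
    intro x hx
    rw [Metric.cauchySeq_iff]
    intro ε hε
    obtain ⟨ρ, hρ, L, hL0, hballsub, hlip⟩ := lip_est hopen f hol ball hx
    set δ : ℝ := min ρ (ε/(3*(L+1))) with hδdef
    have hδpos : 0 < δ := lt_min hρ (by positivity)
    have hopen2 : IsOpen (Metric.ball x δ ∩ sector n) := Metric.isOpen_ball.inter hopen
    have hne : (Metric.ball x δ ∩ sector n).Nonempty := ⟨x, Metric.mem_ball_self hδpos, hx⟩
    obtain ⟨d, hdD, hdmem⟩ := hDd.exists_mem_open hopen2 hne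
    have hd' : d ∈ D' := ⟨hdD, hdmem.2⟩
    have hcd : CauchySeq (fun q => f (φ q) d) := (hpt ⟨d, hd'⟩).cauchySeq
    rw [Metric.cauchySeq_iff] at hcd
    obtain ⟨N, hN⟩ := hcd (ε/3) (by positivity)
    refine ⟨N, fun p hp q hq => ?_⟩
    have hxb : x ∈ Metric.ball x ρ := Metric.mem_ball_self hρ
    have hdb : d ∈ Metric.ball x ρ := by
      have := Metric.mem_ball.1 hdmem.1
      exact Metric.mem_ball.2 (lt_of_lt_of_le this (min_le_left _ _))
    have hdd : dist x d * (L+1) < ε/3 := by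
      have h1 : dist x d < ε/(3*(L+1)) := by
        rw [dist_comm]
        exact lt_of_lt_of_le (Metric.mem_ball.1 hdmem.1) (min_le_right _ _)
      rw [← lt_div_iff₀ (by positivity)]
      calc dist x d < ε/(3*(L+1)) := h1
        _ = ε/3/(L+1) := (div_div ε 3 (L+1)).symm
    have hterm : ∀ j, dist (f (φ j) x) (f (φ j) d) < ε/3 := by
      intro j
      calc dist (f (φ j) x) (f (φ j) d) ≤ L * dist x d := hlip (φ j) x hxb d hdb
        _ ≤ dist x d * (L+1) := by nlinarith [dist_nonneg (x := x) (y := d)]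
        _ < ε/3 := hdd
    calc dist (f (φ p) x) (f (φ q) x)
        ≤ dist (f (φ p) x) (f (φ p) d) + dist (f (φ p) d) (f (φ q) d)
          + dist (f (φ q) d) (f (φ q) x) := dist_triangle4 _ _ _ _
      _ < ε/3 + ε/3 + ε/3 := by
          refine add_lt_add (add_lt_add (hterm p) (hN p hp q hq)) ?_
          rw [dist_comm]; exact hterm q
      _ = ε := by ring
  set g : ℂ → ℂ := fun ζ => limUnder atTop (fun q => f (φ q) ζ) with hgdef
  have hg : ∀ x ∈ sector n, Tendsto (fun q => f (φ q) x) atTop (𝓝 (g x)) :=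
    fun x hx => (hCauchy x hx).tendsto_limUnder
  -- equicontinuity on each compact piece
  have heq : ∀ m, EquicontinuousOn (fun q => f (φ q)) (sectK n m) := by
    intro m x hx
    have hx' : x ∈ sector n := sectK_subset_sector hn m hx
    obtain ⟨ρ, hρ, L, hL0, hballsub, hlip⟩ := lip_est hopen f hol ball hx'
    intro U hU
    obtain ⟨ε, hε, hUε⟩ := Metric.mem_uniformity_dist.mp hU
    set δ : ℝ := min ρ (ε/(L+1)) with hδdef
    have hδpos : 0 < δ := lt_min hρ (by positivity)
    have hmem : Metric.ball x δ ∈ nhdsWithin x (sectK n m) :=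
      nhdsWithin_le_nhds (Metric.ball_mem_nhds x hδpos)
    filter_upwards [hmem] with y hy
    intro i
    apply hUε
    have hyρ : y ∈ Metric.ball x ρ :=
      Metric.ball_subset_ball (min_le_left _ _) hy
    have h1 : dist (f (φ i) x) (f (φ i) y) ≤ L * dist x y :=
      hlip (φ i) x (Metric.mem_ball_self hρ) y hyρ
    have h2 : dist x y < ε/(L+1) := by
      rw [dist_comm]
      exact lt_of_lt_of_le (Metric.mem_ball.1 hy) (min_le_right _ _)
    have h3 : dist x y * (L+1) < ε := by
      rw [← lt_div_iff₀ (by positivity)]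
      exact h2
    calc dist (f (φ i) x) (f (φ i) y) ≤ L * dist x y := h1
      _ ≤ dist x y * (L+1) := by nlinarith [dist_nonneg (x := x) (y := y)]
      _ < ε := h3
  -- uniform convergence on each compact piece via Ascoli
  have hUnif : ∀ m, TendstoUniformlyOn (fun q => f (φ q)) g atTop (sectK n m) := by
    intro m
    set 𝔖 : Set (Set ℂ) := {sectK n m} with h𝔖def
    have hcomp : ∀ K ∈ 𝔖, IsCompact K := by
      intro K hK
      rw [h𝔖def, mem_singleton_iff] at hK
      rw [hK]; exact isCompact_sectK n m
    have heqc : ∀ K ∈ 𝔖, EquicontinuousOn (fun q => f (φ q)) K := by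
      intro K hK
      rw [h𝔖def, mem_singleton_iff] at hK
      rw [hK]; exact heq m
    have hptw : Tendsto ((⋃₀ 𝔖).restrict ∘ (fun q => f (φ q))) atTop
        (𝓝 <| (⋃₀ 𝔖).restrict g) := by
      rw [tendsto_pi_nhds]
      intro x
      have hx : (x:ℂ) ∈ sectK n m := by
        have := x.2
        simpa [h𝔖def] using this
      exact hg x (sectK_subset_sector hn m hx)
    have h1 : Tendsto (UniformOnFun.ofFun 𝔖 ∘ (fun q => f (φ q))) atTop
        (𝓝 <| UniformOnFun.ofFun 𝔖 g) :=
      (EquicontinuousOn.tendsto_uniformOnFun_iff_pi' hcomp heqc atTop g).2 hptw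
    have h2 := UniformOnFun.tendsto_iff_tendstoUniformlyOn.1 h1 (sectK n m)
      (by rw [h𝔖def]; exact rfl)
    exact h2
  -- locally uniform convergence on sector (n+1)
  have hn1 : 1 ≤ n + 1 := by omega
  have hloc : TendstoLocallyUniformlyOn (fun q => f (φ q)) g atTop (sector (n+1)) := by
    rw [tendstoLocallyUniformlyOn_iff_forall_isCompact (isOpen_sector hn1)]
    intro K hKsub hKc
    rcases K.eq_empty_or_nonempty with rfl | hne
    · exact tendstoUniformlyOn_empty
    obtain ⟨z0, hz0K, hz0min⟩ := hKc.exists_isMinOn hne continuous_norm.continuousOn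
    have hz0pos : 0 < ‖z0‖ := (hKsub hz0K).2.1
    obtain ⟨m, hm⟩ := exists_nat_one_div_lt hz0pos
    apply (hUnif m).mono
    intro ζ hζ
    apply sector_succ_mem_sectK hn m (hKsub hζ)
    have hmin : ‖z0‖ ≤ ‖ζ‖ := hz0min hζ
    have h1 : (1:ℝ)/((m:ℝ)+2) ≤ 1/((m:ℝ)+1) := by
      apply one_div_le_one_div_of_le
      · positivity
      · linarith
    linarith
  have hdiff : DifferentiableOn ℂ g (sector (n+1)) :=
    hloc.differentiableOn
      (Eventually.of_forall fun q => (hol (φ q)).mono (sector_succ_subset hn))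
      (isOpen_sector hn1)
  -- bound for g on sector n
  have hgb : ∀ ζ ∈ sector n, (‖ζ‖)^n * ‖g ζ‖ ≤ 1 := by
    intro ζ hζ
    have h1 : Tendsto (fun q => (‖ζ‖)^n * ‖f (φ q) ζ‖) atTop
        (𝓝 ((‖ζ‖)^n * ‖g ζ‖)) :=
      tendsto_const_nhds.mul ((continuous_norm.tendsto _).comp (hg ζ hζ))
    exact le_of_tendsto h1 (Eventually.of_forall fun q => ball (φ q) ζ hζ)
  have habs_le_one : ∀ ζ ∈ sector (n+1), ‖ζ‖ ≤ 1 := by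
    intro ζ hζ
    have h3 : ‖ζ‖ < 1/((n:ℝ)+1) := by
      have := hζ.2.2
      push_cast at this
      exact this
    linarith [one_div_succ_le_one hn]
  refine ⟨φ, hφ, g, hdiff, ⟨1, fun ζ hζ => ?_⟩, ?_⟩
  · -- norm bound for g
    have hζn : ζ ∈ sector n := sector_succ_subset hn hζ
    have h1 := hgb ζ hζn
    have h2 := habs_le_one ζ hζ
    have h0 := norm_nonneg ζ
    have h4 := norm_nonneg (g ζ)
    calc (‖ζ‖)^(n+1) * ‖g ζ‖
        = ((‖ζ‖)^n * ‖g ζ‖) * ‖ζ‖ := by ring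
      _ ≤ 1 * 1 := by
          apply mul_le_mul h1 h2 h0 zero_le_one
      _ = 1 := by ring
  · -- convergence in the weighted norm
    intro ε hε
    obtain ⟨m, hm⟩ := exists_nat_gt (2/ε)
    have h2m : (2:ℝ)/((m:ℝ)+2) < ε := by
      rw [div_lt_iff₀ (by positivity)]
      have h1 : 2 < (m:ℝ) * ε := by
        rw [div_lt_iff₀ hε] at hm
        exact hm
      nlinarith
    have := Metric.tendstoUniformlyOn_iff.1 (hUnif m) ε hε
    rw [eventually_atTop] at this
    obtain ⟨q₀, hq₀⟩ := this
    refine ⟨q₀, fun q hq ζ hζ => ?_⟩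
    by_cases hcase : 1/((m:ℝ)+2) ≤ ‖ζ‖
    · have hK : ζ ∈ sectK n m := sector_succ_mem_sectK hn m hζ hcase
      have hd : dist (g ζ) (f (φ q) ζ) < ε := hq₀ q hq ζ hK
      have hpow : (‖ζ‖)^(n+1) ≤ 1 :=
        pow_le_one₀ (norm_nonneg ζ) (habs_le_one ζ hζ)
      calc (‖ζ‖)^(n+1) * ‖f (φ q) ζ - g ζ‖
          ≤ 1 * ‖f (φ q) ζ - g ζ‖ :=
            mul_le_mul_of_nonneg_right hpow (norm_nonneg _)
        _ = dist (g ζ) (f (φ q) ζ) := by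
            rw [one_mul, dist_comm, Complex.dist_eq]
        _ ≤ ε := hd.le
    · push_neg at hcase
      have hζn : ζ ∈ sector n := sector_succ_subset hn hζ
      have h1 : (‖ζ‖)^n * ‖f (φ q) ζ‖ ≤ 1 := ball (φ q) ζ hζn
      have h2 : (‖ζ‖)^n * ‖g ζ‖ ≤ 1 := hgb ζ hζn
      have h3 : ‖f (φ q) ζ - g ζ‖ ≤ ‖f (φ q) ζ‖ + ‖g ζ‖ := by
        simpa using norm_sub_le (f (φ q) ζ) (g ζ)
      have h0 := norm_nonneg ζ
      have hpn : (0:ℝ) ≤ (‖ζ‖)^n := pow_nonneg h0 n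
      calc (‖ζ‖)^(n+1) * ‖f (φ q) ζ - g ζ‖
          = ‖ζ‖ * ((‖ζ‖)^n * ‖f (φ q) ζ - g ζ‖) := by ring
        _ ≤ ‖ζ‖ * ((‖ζ‖)^n * (‖f (φ q) ζ‖ + ‖g ζ‖)) := by
            apply mul_le_mul_of_nonneg_left (mul_le_mul_of_nonneg_left h3 hpn) h0
        _ = ‖ζ‖ * ((‖ζ‖)^n * ‖f (φ q) ζ‖
            + (‖ζ‖)^n * ‖g ζ‖) := by ring
        _ ≤ ‖ζ‖ * 2 := by
            apply mul_le_mul_of_nonneg_left (by linarith) h0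
        _ ≤ (1/((m:ℝ)+2)) * 2 := by
            apply mul_le_mul_of_nonneg_right hcase.le (by norm_num)
        _ = 2/((m:ℝ)+2) := by ring
        _ ≤ ε := h2m.le
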